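/- Let J be an adapted complex structure on a finite simple graph G. If v and w are vertices of G with w = Jv and the graph distance between v and w is at least 3 (in particular if they lie in distinct connected components), then both deg(v) and deg(w) are even. -/
import Mathlib


/-!  Framework: the 2-step nilpotent Lie algebra `𝔫_G` associated to a finite simple
graph `G` (Dani–Mainkar construction), and adapted complex structures on it. -/

open scoped BigOperators

namespace GraphLie

variable {V : Type*} [Fintype V] [LinearOrder V]

/-- The underlying real vector space of the Lie algebra `𝔫_G` associated to a graph `G`:
real-valued functions on its basis `V ⊕ G.edgeSet` (vertices and edges). -/
abbrev Niln (G : SimpleGraph V) : Type _ := (V ⊕ G.edgeSet) → ℝ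

variable (G : SimpleGraph V) [DecidableRel G.Adj]

/-- The basis vector of `𝔫_G` corresponding to the vertex `v`. -/
noncomputable def vtx (v : V) : Niln G := Pi.single (Sum.inl v) 1

/-- The basis vector of `𝔫_G` corresponding to the edge `e`. -/
noncomputable def edg (e : G.edgeSet) : Niln G := Pi.single (Sum.inr e) 1

/-- The basis vector of `𝔫_G` corresponding to a vertex or an edge. -/
noncomputable def basisVec (b : V ⊕ G.edgeSet) : Niln G := Pi.single b 1

/-- The bracket of two vertex generators: for adjacent vertices `i < j` (with respect to
the chosen labeling of the vertices) `[v_i, v_j] = e_{i,j}` and `[v_j, v_i] = -e_{i,j}`;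
non-adjacent vertices commute. -/
noncomputable def bracketVtx (i j : V) : Niln G :=
  if h : G.Adj i j then
    (if i < j then edg G ⟨s(i, j), G.mem_edgeSet.mpr h⟩
     else - edg G ⟨s(i, j), G.mem_edgeSet.mpr h⟩)
  else 0

/-- The Lie bracket of `𝔫_G`, extended bilinearly from the generators; all the
edge generators are central. -/
noncomputable def bracket (x y : Niln G) : Niln G :=
  ∑ i : V, ∑ j : V, (x (Sum.inl i) * y (Sum.inl j)) • bracketVtx G i j

/-- An adapted complex structure on the graph `G`: a linear endomorphism `J` of `𝔫_G`
with `J ∘ J = -id`, whose Nijenhuis tensor vanishes, and which sends each basis vector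
(vertex or edge) to plus or minus a basis vector. -/
structure AdaptedCS : Type _ where
  J : Niln G →ₗ[ℝ] Niln G
  j_squared : ∀ x, J (J x) = -x
  integrable : ∀ x y,
    bracket G x y + J (bracket G (J x) y + bracket G x (J y)) - bracket G (J x) (J y) = 0
  adapted : ∀ b : V ⊕ G.edgeSet,
    (∃ b', J (basisVec G b) = basisVec G b') ∨ (∃ b', J (basisVec G b) = - basisVec G b')

variable {G}

/-- An edge of `G` joining vertices `v` and `w` is distinguished if `Jv = w` or `Jw = v`. -/
def AdaptedCS.Distinguished (Jc : AdaptedCS G) (e : G.edgeSet) : Prop :=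
  ∃ v w : V, (e : Sym2 V) = s(v, w) ∧
    (Jc.J (vtx G v) = vtx G w ∨ Jc.J (vtx G w) = vtx G v)

end GraphLie

namespace GraphLie

variable {V : Type*} [Fintype V] [LinearOrder V] {G : SimpleGraph V} [DecidableRel G.Adj]


section Aux

lemma even_card_of_fpf_invol {α : Type*} [Fintype α] (g : α → α)
    (hinv : ∀ x, g (g x) = x) (hne : ∀ x, g x ≠ x) : Even (Fintype.card α) := by
  classical
  let f : Function.End α := g
  have hf : f ^ 2 ^ 1 = 1 := by
    funext x
    show g (g x) = x
    exact hinv x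
  have h := Equiv.Perm.card_fixedPoints_modEq (p := 2) (n := 1) hf
  have hzero : Fintype.card f.fixedPoints = 0 :=
    Fintype.card_eq_zero_iff.mpr ⟨fun x => hne x x.2⟩
  rw [hzero] at h
  exact even_iff_two_dvd.mpr ((Nat.modEq_zero_iff_dvd).mp h)

set_option linter.unusedSectionVars false

lemma basisVec_inl (u : V) : basisVec G (Sum.inl u) = vtx G u := rfl
lemma basisVec_inr (e : G.edgeSet) : basisVec G (Sum.inr e) = edg G e := rfl

lemma bracket_vtx_vtx (i j : V) : bracket G (vtx G i) (vtx G j) = bracketVtx G i j := by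
  simp [bracket, vtx, Pi.single_apply, ite_smul, Finset.sum_ite_eq']

lemma bracket_vtx_edg (i : V) (e : G.edgeSet) : bracket G (vtx G i) (edg G e) = 0 := by
  simp [bracket, edg, Pi.single_apply]

lemma bracket_smul_left (c : ℝ) (x y : Niln G) :
    bracket G (c • x) y = c • bracket G x y := by
  simp only [bracket, Pi.smul_apply, smul_eq_mul, Finset.smul_sum, smul_smul]
  refine Finset.sum_congr rfl fun i _ => Finset.sum_congr rfl fun j _ => ?_
  ring_nf

lemma bracket_smul_right (c : ℝ) (x y : Niln G) :
    bracket G x (c • y) = c • bracket G x y := by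
  simp only [bracket, Pi.smul_apply, smul_eq_mul, Finset.smul_sum, smul_smul]
  refine Finset.sum_congr rfl fun i _ => Finset.sum_congr rfl fun j _ => ?_
  ring_nf

lemma bracketVtx_of_not_adj {i j : V} (h : ¬ G.Adj i j) : bracketVtx G i j = 0 := dif_neg h

lemma bracketVtx_of_adj {i j : V} (h : G.Adj i j) :
    ∃ s : ℝ, (s = 1 ∨ s = -1) ∧
      bracketVtx G i j = s • edg G ⟨s(i, j), G.mem_edgeSet.mpr h⟩ := by
  by_cases hij : i < j
  · exact ⟨1, Or.inl rfl, by simp [bracketVtx, h, hij]⟩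
  · exact ⟨-1, Or.inr rfl, by simp [bracketVtx, h, hij]⟩

lemma edg_smul_inj {s t : ℝ} {e f : G.edgeSet} (hs : s ≠ 0)
    (h : s • edg G e = t • edg G f) : e = f := by
  by_contra hne
  have := congrFun h (Sum.inr e)
  simp [edg, Pi.single_apply, Ne.symm hne, hs] at this

lemma vtx_smul_inj {s t : ℝ} {a b : V} (hs : s ≠ 0)
    (h : s • vtx G a = t • vtx G b) : a = b := by
  by_contra hne
  have := congrFun h (Sum.inl a)
  simp [vtx, Pi.single_apply, Ne.symm hne, hs] at this

lemma smul_edg_ne_zero {s : ℝ} (hs : s ≠ 0) (e : G.edgeSet) : s • edg G e ≠ 0 := by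
  intro h
  have := congrFun h (Sum.inr e)
  simp [edg] at this
  exact hs this

lemma sign_ne_zero {s : ℝ} (hs : s = 1 ∨ s = -1) : s ≠ 0 := by
  rcases hs with rfl | rfl <;> norm_num

lemma adapted' (Jc : AdaptedCS G) (b : V ⊕ G.edgeSet) :
    ∃ (η : ℝ) (b' : V ⊕ G.edgeSet), (η = 1 ∨ η = -1) ∧
      Jc.J (basisVec G b) = η • basisVec G b' := by
  rcases Jc.adapted b with ⟨b', h⟩ | ⟨b', h⟩
  · exact ⟨1, b', Or.inl rfl, by simpa using h⟩
  · exact ⟨-1, b', Or.inr rfl, by simpa using h⟩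

/-- Key step: each neighbour of `v` is sent by `J` to `±` a neighbour of `v`. -/
lemma key_step (Jc : AdaptedCS G) (v w : V) (ε : ℝ)
    (hvw : Jc.J (vtx G v) = ε • vtx G w)
    (hnadj : ¬ G.Adj v w)
    (hcn : ∀ u, ¬ (G.Adj v u ∧ G.Adj w u))
    (u : V) (hu : G.Adj v u) :
    ∃ (u' : V) (η : ℝ), G.Adj v u' ∧ (η = 1 ∨ η = -1) ∧
      Jc.J (vtx G u) = η • vtx G u' := by
  have hwu : ¬ G.Adj w u := fun h => hcn u ⟨hu, h⟩
  obtain ⟨η, b', hη, hJu⟩ := adapted' Jc (Sum.inl u)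
  rw [basisVec_inl] at hJu
  have hint := Jc.integrable (vtx G v) (vtx G u)
  rw [hvw, hJu] at hint
  obtain ⟨s, hs, hbr⟩ := bracketVtx_of_adj hu
  rcases b' with u' | e
  · rw [basisVec_inl] at hJu hint
    refine ⟨u', η, ?_, hη, hJu⟩
    by_contra hvu'
    simp only [bracket_smul_left, bracket_smul_right, bracket_vtx_vtx,
      bracketVtx_of_not_adj hwu, bracketVtx_of_not_adj hvu',
      smul_zero, zero_add, map_smul, map_zero, smul_zero, add_zero] at hint
    by_cases hwu' : G.Adj w u'
    · obtain ⟨t, ht, hbr'⟩ := bracketVtx_of_adj hwu'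
      rw [hbr, hbr', sub_eq_zero, smul_smul, smul_smul] at hint
      have he := edg_smul_inj (sign_ne_zero hs) hint
      rw [Subtype.ext_iff] at he
      simp only [Sym2.eq_iff] at he
      rcases he with ⟨rfl, rfl⟩ | ⟨rfl, rfl⟩
      · exact hwu hwu'
      · exact hnadj hu
    · rw [bracketVtx_of_not_adj hwu'] at hint
      rw [smul_zero, smul_zero, sub_zero, hbr] at hint
      exact smul_edg_ne_zero (sign_ne_zero hs) _ hint
  · exfalso
    rw [basisVec_inr] at hJu hint
    simp only [bracket_smul_left, bracket_smul_right, bracket_vtx_vtx, bracket_vtx_edg,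
      bracketVtx_of_not_adj hwu,
      smul_zero, zero_add, add_zero, map_zero, sub_zero] at hint
    rw [hbr] at hint
    exact smul_edg_ne_zero (sign_ne_zero hs) _ hint

/-- If every neighbour of `v` is sent by `J` to `±` a neighbour of `v`, then
the degree of `v` is even. -/
lemma even_degree_of_key (Jc : AdaptedCS G) (v : V)
    (h : ∀ u, G.Adj v u → ∃ (u' : V) (η : ℝ), G.Adj v u' ∧ (η = 1 ∨ η = -1) ∧
      Jc.J (vtx G u) = η • vtx G u') :
    Even (G.degree v) := by
  classical
  choose f η hadj hη hJ using h
  have key2 : ∀ (u : V) (hu : G.Adj v u),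
      Jc.J (vtx G (f u hu)) = (-(η u hu)) • vtx G u := by
    intro u hu
    have h2 := Jc.j_squared (vtx G u)
    rw [hJ u hu, map_smul] at h2
    rcases hη u hu with he | he <;>
      · rw [he] at h2 ⊢
        simp only [one_smul, neg_smul, neg_neg, neg_one_smul] at h2 ⊢
        first
          | exact h2
          | exact neg_inj.mp h2
  have hne : ∀ (u : V) (hu : G.Adj v u), f u hu ≠ u := by
    intro u hu heq
    have h1 := hJ u hu
    rw [heq] at h1
    have h2 := key2 u hu
    rw [heq] at h2
    have h3 := h1.symm.trans h2
    have h4 := congrFun h3 (Sum.inl u)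
    simp only [Pi.smul_apply, vtx, Pi.single_eq_same, smul_eq_mul, mul_one] at h4
    rcases hη u hu with he | he <;> rw [he] at h4 <;> norm_num at h4
  have hff : ∀ (u : V) (hu : G.Adj v u), f (f u hu) (hadj u hu) = u := by
    intro u hu
    have h1 := hJ (f u hu) (hadj u hu)
    have h2 := key2 u hu
    exact vtx_smul_inj (sign_ne_zero (hη _ _)) (h1.symm.trans h2)
  let g : G.neighborSet v → G.neighborSet v :=
    fun x => ⟨f x.1 x.2, hadj x.1 x.2⟩
  have hinv : ∀ x, g (g x) = x := by
    intro x
    exact Subtype.ext (hff x.1 x.2)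
  have hgne : ∀ x, g x ≠ x := by
    intro x hx
    exact hne x.1 x.2 (congrArg Subtype.val hx)
  have := even_card_of_fpf_invol g hinv hgne
  rwa [SimpleGraph.card_neighborSet_eq_degree] at this

end Aux

/-- If `v` and `w` are vertices of `G` with `w = Jv` at graph distance
at least `3` (in particular if they lie in distinct connected components), then both
`deg v` and `deg w` are even. -/
theorem statement9 (Jc : AdaptedCS G) (v w : V)
    (hvw : Jc.J (vtx G v) = vtx G w)
    (hd : ¬ G.Reachable v w ∨ 3 ≤ G.dist v w) :
    Even (G.degree v) ∧ Even (G.degree w) := by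
  have hvw1 : Jc.J (vtx G v) = (1 : ℝ) • vtx G w := by rw [one_smul]; exact hvw
  have hwv : Jc.J (vtx G w) = (-1 : ℝ) • vtx G v := by
    have h2 := Jc.j_squared (vtx G v)
    rw [hvw] at h2
    rw [h2, neg_one_smul]
  have hnadj : ¬ G.Adj v w := by
    intro h
    rcases hd with hr | hdist
    · exact hr h.reachable
    · have h1 : G.dist v w ≤ 1 := by
        have := SimpleGraph.dist_le h.toWalk
        simpa using this
      omega
  have hcn : ∀ u, ¬ (G.Adj v u ∧ G.Adj w u) := by
    rintro u ⟨h1, h2⟩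
    rcases hd with hr | hdist
    · exact hr ⟨SimpleGraph.Walk.cons h1 h2.symm.toWalk⟩
    · have hle : G.dist v w ≤ 2 := by
        have := SimpleGraph.dist_le (SimpleGraph.Walk.cons h1 h2.symm.toWalk)
        simpa using this
      omega
  constructor
  · exact even_degree_of_key Jc v (key_step Jc v w 1 hvw1 hnadj hcn)
  · exact even_degree_of_key Jc w (key_step Jc w v (-1) hwv (fun h => hnadj h.symm)
      (fun u hu => hcn u ⟨hu.2, hu.1⟩))

end GraphLie
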